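/- Let X be a Noetherian integral scheme, i : U → X the inclusion of a dense open subscheme, and F a coherent sheaf on X of constant rank r (i.e., F ⊗ K(X) ≅ K(X)^r for the function field sheaf K(X)) with F|_U locally free. Then the image ⟦F⟧ of the natural map ⋀^r F → ⋀^r F ⊗_{O_X} K(X) ≅ K(X) is a coherent fractional ideal sheaf, and its restriction to U is invertible, isomorphic to ⋀^r (F|_U). -/

import Mathlib

open scoped TensorProduct

set_option maxHeartbeats 2000000 in
/-- Oneto–Zatini fractional ideal: let `A` be a Noetherian domain with
fraction field `K` (the affine model of the integral scheme `X`), `M` a finitely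
generated `A`-module of constant rank `r` (i.e. `M ⊗ K ≅ K^r`, witnessed by `φ`),
which is locally free on the dense open `U = D(t)` (i.e. `M_t` is free over `A_t`,
`t ≠ 0`).  Then the image `⟦M⟧` of `⋀^r M → ⋀^r M ⊗ K ≅ K` — the `A`-submodule of `K`
spanned by the `r × r` determinants of elements of `M` under `φ` — is a finitely
generated (coherent) fractional ideal, and its restriction to `U` is invertible,
isomorphic to `⋀^r(M|_U)`: after inverting `t` it is generated by a single nonzero
element. -/
theorem stmt18 (A : Type u) [CommRing A] [IsDomain A] [IsNoetherianRing A]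
    (M : Type u) [AddCommGroup M] [Module A M] [Module.Finite A M]
    (r : ℕ)
    (φ : (FractionRing A ⊗[A] M) ≃ₗ[FractionRing A] (Fin r → FractionRing A))
    (t : A) (ht : t ≠ 0)
    (hfree : Nonempty (Module.Basis (Fin r) (Localization.Away t)
      (LocalizedModule (Submonoid.powers t) M))) :
    let J : Submodule A (FractionRing A) :=
      Submodule.span A {x : FractionRing A | ∃ v : Fin r → M,
        x = Matrix.det (Matrix.of fun i j => φ ((1 : FractionRing A) ⊗ₜ[A] v i) j)}
    J.FG ∧ IsFractional (nonZeroDivisors A) J ∧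
    ∃ x ∈ J, x ≠ 0 ∧ ∀ y ∈ J, ∃ (m : ℕ) (a : A), (t ^ m) • y = a • x := by
  intro J
  classical
  obtain ⟨b⟩ := hfree
  set K := FractionRing A with hKdef
  -- The bundled "row" map `M →ₗ[A] K^r`, `v ↦ φ (1 ⊗ v)`.
  set L : M →ₗ[A] (Fin r → K) :=
    (φ.restrictScalars A).toLinearMap.comp (TensorProduct.mk A K M 1) with hLdef
  have hLapp : ∀ v : M, L v = φ ((1 : K) ⊗ₜ[A] v) := fun _ => rfl
  -- choose representatives of the basis vectors
  have hp : ∀ n : ℕ, t ^ n ∈ Submonoid.powers t :=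
    fun n => Submonoid.pow_mem _ (Submonoid.mem_powers t) n
  have hrep : ∀ x : LocalizedModule (Submonoid.powers t) M,
      ∃ (mi : M) (ki : ℕ), x = LocalizedModule.mk mi ⟨t ^ ki, hp ki⟩ := by
    intro x
    induction x using LocalizedModule.induction_on with
    | h mi si =>
      obtain ⟨ki, hki⟩ := si.2
      exact ⟨mi, ki, by rw [show si = ⟨t ^ ki, hp ki⟩ from Subtype.ext hki.symm]⟩
  choose m k hmk using fun i => hrep (b i)
  have hb1 : ∀ i, (t ^ (k i) : A) • b i = LocalizedModule.mk (m i) 1 := by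
    intro i
    rw [hmk i, LocalizedModule.smul'_mk]
    have := LocalizedModule.mk_cancel (M := M)
      (⟨t ^ k i, hp (k i)⟩ : Submonoid.powers t) (m i)
    simpa [Submonoid.smul_def] using this
  -- Key lemma: every element of `M` is, up to a power of `t`, an `A`-combination of the `m i`.
  have hA : ∀ v : M, ∃ (e : ℕ) (a : Fin r → A),
      t ^ e • v = ∑ i, a i • m i := by
    intro v
    set f := LocalizedModule.mkLinearMap (Submonoid.powers t) M with hf
    set c : Fin r → Localization.Away t := fun i => b.repr (f v) i with hc
    have hrepr : f v = ∑ i, c i • b i := (b.sum_repr (f v)).symm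
    obtain ⟨s, hs⟩ := IsLocalization.exist_integer_multiples_of_finite
      (Submonoid.powers t) c
    choose a ha using hs
    obtain ⟨Ns, hNs'⟩ := s.2
    have hNs : t ^ Ns = (s : A) := hNs'
    set N := Finset.univ.sup k with hN
    have hbN : ∀ i, (t ^ N : A) • b i = f ((t ^ (N - k i)) • m i) := by
      intro i
      have hki : k i ≤ N := Finset.le_sup (Finset.mem_univ i)
      have h1 : (t ^ N : A) • b i = t ^ (N - k i) • ((t ^ k i : A) • b i) := by
        rw [← mul_smul, ← pow_add, Nat.sub_add_cancel hki]
      rw [h1, hb1 i]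
      simp [f, LocalizedModule.smul'_mk, LocalizedModule.mkLinearMap_apply]
    have hstep : f ((t ^ N * (s : A)) • v) = f (∑ i, (a i * t ^ (N - k i)) • m i) := by
      rw [map_smul, map_sum]
      calc (t ^ N * (s : A)) • f v
          = t ^ N • ((s : A) • f v) := mul_smul _ _ _
        _ = t ^ N • ∑ i, ((s : A) • c i) • b i := by
            rw [hrepr, Finset.smul_sum]
            exact congrArg _ (Finset.sum_congr rfl fun i _ => (smul_assoc _ _ _).symm)
        _ = t ^ N • ∑ i, a i • b i := by
            exact congrArg _ (Finset.sum_congr rfl fun i _ => by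
              rw [← ha i, algebraMap_smul])
        _ = ∑ i, a i • ((t ^ N : A) • b i) := by
            rw [Finset.smul_sum]
            exact Finset.sum_congr rfl fun i _ => by
              rw [← mul_smul, mul_comm, mul_smul]
        _ = ∑ i, f ((a i * t ^ (N - k i)) • m i) := by
            exact Finset.sum_congr rfl fun i _ => by
              rw [hbN i, ← map_smul, ← mul_smul]
    have hmk' : (LocalizedModule.mk ((t ^ N * (s : A)) • v) 1 :
        LocalizedModule (Submonoid.powers t) M)
        = LocalizedModule.mk (∑ i, (a i * t ^ (N - k i)) • m i) 1 := hstep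
    obtain ⟨u, hu⟩ := LocalizedModule.mk_eq.mp hmk'
    obtain ⟨Nu, hNu⟩ := u.2
    simp only [one_smul, Submonoid.smul_def, ← hNu] at hu
    refine ⟨Nu + (N + Ns), fun i => t ^ Nu * (a i * t ^ (N - k i)), ?_⟩
    calc t ^ (Nu + (N + Ns)) • v = (t ^ Nu : A) • ((t ^ N * (s : A)) • v) := by
          rw [pow_add, pow_add, hNs, mul_smul]
      _ = (t ^ Nu : A) • ∑ i, (a i * t ^ (N - k i)) • m i := by rw [hu]
      _ = ∑ i, (t ^ Nu * (a i * t ^ (N - k i))) • m i := by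
          rw [Finset.smul_sum]
          exact Finset.sum_congr rfl fun i _ => (mul_smul _ _ _).symm
  -- the row relation in `K^r`
  have hrow : ∀ v : M, ∃ (e : ℕ) (a : Fin r → A),
      (t ^ e : A) • L v = ∑ i, a i • L (m i) := by
    intro v
    obtain ⟨e, a, h⟩ := hA v
    refine ⟨e, a, ?_⟩
    rw [← map_smul, h, map_sum]
    simp only [map_smul]
  -- clearing denominators in `K ⊗ M`
  have hclear : ∀ w : K ⊗[A] M, ∃ (d : A), d ≠ 0 ∧ ∃ u : M,
      algebraMap A K d • w = (1 : K) ⊗ₜ[A] u := by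
    intro w
    induction w using TensorProduct.induction_on with
    | zero => exact ⟨1, one_ne_zero, 0, by simp⟩
    | tmul x y =>
      obtain ⟨⟨nn, d⟩, hd⟩ := IsLocalization.surj (nonZeroDivisors A) x
      refine ⟨d, nonZeroDivisors.ne_zero d.2, nn • y, ?_⟩
      rw [TensorProduct.smul_tmul', smul_eq_mul, mul_comm, hd,
        Algebra.algebraMap_eq_smul_one, TensorProduct.smul_tmul]
    | add w₁ w₂ ih₁ ih₂ =>
      obtain ⟨d₁, h₁, u₁, hu₁⟩ := ih₁
      obtain ⟨d₂, h₂, u₂, hu₂⟩ := ih₂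
      refine ⟨d₁ * d₂, mul_ne_zero h₁ h₂, d₂ • u₁ + d₁ • u₂, ?_⟩
      have e1 : algebraMap A K (d₁ * d₂) • w₁ = algebraMap A K d₂ • ((1 : K) ⊗ₜ[A] u₁) := by
        rw [map_mul, mul_comm, mul_smul, hu₁]
      have e2 : algebraMap A K (d₁ * d₂) • w₂ = algebraMap A K d₁ • ((1 : K) ⊗ₜ[A] u₂) := by
        rw [map_mul, mul_smul, hu₂]
      rw [smul_add, e1, e2, algebraMap_smul, algebraMap_smul,
        TensorProduct.tmul_add, TensorProduct.tmul_smul, TensorProduct.tmul_smul]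
  -- the rows `L (m i)` span `K^r`
  have hspan : ⊤ ≤ Submodule.span K (Set.range fun i => L (m i)) := by
    rintro z -
    obtain ⟨d, hd0, u, hdu⟩ := hclear (φ.symm z)
    have hd0' : algebraMap A K d ≠ 0 := fun h =>
      hd0 (IsFractionRing.injective A K (by simpa using h))
    have h1 : algebraMap A K d • z = L u := by
      have h2 := congrArg φ hdu
      rw [map_smul, LinearEquiv.apply_symm_apply] at h2
      rw [h2, hLapp]
    have hz : z = (algebraMap A K d)⁻¹ • L u := by
      rw [← h1, smul_smul, inv_mul_cancel₀ hd0', one_smul]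
    rw [hz]
    refine Submodule.smul_mem _ _ ?_
    obtain ⟨e, a, he⟩ := hrow u
    have hte : algebraMap A K (t ^ e) ≠ 0 := fun h =>
      (pow_ne_zero e ht) (IsFractionRing.injective A K (by simpa using h))
    have hLu : L u = (algebraMap A K (t ^ e))⁻¹ • ∑ i, a i • L (m i) := by
      rw [← he, ← algebraMap_smul K (t ^ e) (L u), smul_smul, inv_mul_cancel₀ hte, one_smul]
    rw [hLu]
    refine Submodule.smul_mem _ _ (Submodule.sum_mem _ fun i _ => ?_)
    rw [← algebraMap_smul K (a i) (L (m i))]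
    exact Submodule.smul_mem _ _ (Submodule.subset_span ⟨i, rfl⟩)
  have hind : LinearIndependent K (fun i => L (m i)) :=
    linearIndependent_of_top_le_span_of_card_eq_finrank hspan
      (by simp [Module.finrank_fin_fun])
  -- the generator
  set M0 : Matrix (Fin r) (Fin r) K := Matrix.of fun i j => φ ((1 : K) ⊗ₜ[A] m i) j with hM0def
  have hM0unit : IsUnit M0 := by
    rw [← Matrix.linearIndependent_rows_iff_isUnit]
    exact hind
  have hx0 : M0.det ≠ 0 := (Matrix.isUnit_iff_isUnit_det M0).mp hM0unit |>.ne_zero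
  have hxJ : M0.det ∈ J := Submodule.subset_span ⟨m, rfl⟩
  -- divisibility after inverting t
  have hgen : ∀ v : Fin r → M, ∃ (n : ℕ) (a : A),
      (t ^ n) • (Matrix.of fun i j => φ ((1 : K) ⊗ₜ[A] v i) j).det = a • M0.det := by
    intro v
    choose e0 a0 h0 using fun i => hA (v i)
    set e := Finset.univ.sup e0 with he
    set aa : Fin r → Fin r → A := fun i j => t ^ (e - e0 i) * a0 i j with haa
    have hv : ∀ i, t ^ e • v i = ∑ j, aa i j • m j := by
      intro i
      have hi : e0 i ≤ e := Finset.le_sup (Finset.mem_univ i)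
      calc t ^ e • v i = t ^ (e - e0 i) • (t ^ e0 i • v i) := by
            rw [← mul_smul, ← pow_add, Nat.sub_add_cancel hi]
        _ = t ^ (e - e0 i) • ∑ j, a0 i j • m j := by rw [h0 i]
        _ = ∑ j, aa i j • m j := by
            rw [Finset.smul_sum]
            exact Finset.sum_congr rfl fun j _ => by rw [← mul_smul]
    set Nm : Matrix (Fin r) (Fin r) K := Matrix.of fun i j => φ ((1 : K) ⊗ₜ[A] v i) j with hNm
    have hmat : algebraMap A K (t ^ e) • Nm = (Matrix.of aa).map (algebraMap A K) * M0 := by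
      ext i j
      have hr : (t ^ e : A) • L (v i) = ∑ jj, aa i jj • L (m jj) := by
        rw [← map_smul, hv i, map_sum]
        simp only [map_smul]
      have hr' := congrFun hr j
      simp only [Pi.smul_apply, Finset.sum_apply, Algebra.smul_def, hLapp] at hr'
      simpa [Nm, M0, Matrix.mul_apply, Algebra.smul_def] using hr'
    have hmd : algebraMap A K (Matrix.of aa).det
        = ((Matrix.of aa).map (algebraMap A K)).det := (algebraMap A K).map_det _
    have hdet := congrArg Matrix.det hmat
    rw [Matrix.det_smul, Matrix.det_mul, ← hmd, Fintype.card_fin] at hdet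
    refine ⟨e * r, (Matrix.of aa).det, ?_⟩
    calc (t ^ (e * r)) • Nm.det = algebraMap A K ((t ^ e) ^ r) * Nm.det := by
          rw [Algebra.smul_def, pow_mul]
      _ = (algebraMap A K (t ^ e)) ^ r * Nm.det := by rw [map_pow]
      _ = algebraMap A K (Matrix.of aa).det * M0.det := hdet
      _ = (Matrix.of aa).det • M0.det := (Algebra.smul_def _ _).symm
  have hdiv : ∀ y ∈ J, ∃ (n : ℕ) (a : A), (t ^ n) • y = a • M0.det := by
    intro y hy
    induction hy using Submodule.span_induction with
    | mem x hx =>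
      obtain ⟨v, rfl⟩ := hx
      exact hgen v
    | zero => exact ⟨0, 0, by simp⟩
    | add x y hx hy ihx ihy =>
      obtain ⟨n₁, a₁, h₁⟩ := ihx
      obtain ⟨n₂, a₂, h₂⟩ := ihy
      refine ⟨n₁ + n₂, t ^ n₂ * a₁ + t ^ n₁ * a₂, ?_⟩
      rw [smul_add, add_smul]
      congr 1
      · rw [pow_add, mul_comm, mul_smul, h₁, mul_smul]
      · rw [pow_add, mul_smul, h₂, mul_smul]
    | smul cc x hx ihx =>
      obtain ⟨n₁, a₁, h₁⟩ := ihx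
      exact ⟨n₁, cc * a₁, by rw [smul_comm, h₁, mul_smul]⟩
  -- fractionality
  have hfrac : IsFractional (nonZeroDivisors A) J := by
    obtain ⟨n, g, hg⟩ := Module.Finite.exists_fin (R := A) (M := M)
    obtain ⟨d, hd⟩ := IsLocalization.exist_integer_multiples_of_finite
      (nonZeroDivisors A) (fun p : Fin n × Fin r => L (g p.1) p.2)
    have hint : ∀ (v : M) (j : Fin r), IsLocalization.IsInteger A ((d : A) • L v j) := by
      intro v j
      have hv : v ∈ Submodule.span A (Set.range g) := hg ▸ Submodule.mem_top
      obtain ⟨c, rfl⟩ := (Submodule.mem_span_range_iff_exists_fun A).mp hv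
      have hsum : L (∑ i, c i • g i) j = ∑ i, c i • L (g i) j := by
        rw [map_sum, Finset.sum_apply]
        exact Finset.sum_congr rfl fun i _ => by rw [map_smul, Pi.smul_apply]
      rw [hsum, Finset.smul_sum]
      refine Subsemiring.sum_mem _ fun i _ => ?_
      rw [smul_comm]
      exact IsLocalization.isInteger_smul (hd (i, j))
    refine ⟨(d : A) ^ r, pow_mem d.2 r, fun y hy => ?_⟩
    induction hy using Submodule.span_induction with
    | mem x hx =>
      obtain ⟨v, rfl⟩ := hx
      choose cA hcA using fun p : Fin r × Fin r => hint (v p.1) p.2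
      refine ⟨(Matrix.of fun i j => cA (i, j)).det, ?_⟩
      have hmat : (Matrix.of fun i j => cA (i, j)).map (algebraMap A K)
          = algebraMap A K (d : A) • Matrix.of fun i j => φ ((1 : K) ⊗ₜ[A] v i) j := by
        ext i j
        simp only [Matrix.map_apply, Matrix.of_apply, Matrix.smul_apply, smul_eq_mul]
        rw [hcA (i, j), Algebra.smul_def, hLapp]
      have hmd : algebraMap A K (Matrix.of fun i j => cA (i, j)).det
          = ((Matrix.of fun i j => cA (i, j)).map (algebraMap A K)).det :=
        (algebraMap A K).map_det _
      calc algebraMap A K (Matrix.of fun i j => cA (i, j)).det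
          = ((Matrix.of fun i j => cA (i, j)).map (algebraMap A K)).det := hmd
        _ = (algebraMap A K (d : A) • Matrix.of fun i j => φ ((1 : K) ⊗ₜ[A] v i) j).det := by
            rw [hmat]
        _ = (algebraMap A K (d : A)) ^ r *
              (Matrix.of fun i j => φ ((1 : K) ⊗ₜ[A] v i) j).det := by
            rw [Matrix.det_smul, Fintype.card_fin]
        _ = (d : A) ^ r • (Matrix.of fun i j => φ ((1 : K) ⊗ₜ[A] v i) j).det := by
            rw [Algebra.smul_def, map_pow]
    | zero => rw [smul_zero]; exact IsLocalization.isInteger_zero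
    | add x y hx hy ihx ihy =>
      rw [smul_add]
      exact IsLocalization.isInteger_add ihx ihy
    | smul cc x hx ihx =>
      rw [smul_comm]
      exact IsLocalization.isInteger_smul ihx
  refine ⟨?_, hfrac, M0.det, hxJ, hx0, hdiv⟩
  · have := FractionalIdeal.fg_of_isNoetherianRing (P := K) (le_refl (nonZeroDivisors A))
      ⟨J, hfrac⟩
    exact this
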